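/- arXiv:1805.03240 — 2 statements merged into one kernel-verified Lean document; each statement's English description precedes it below -/
import Mathlib

section
/- For any m ∈ [0,1) and any positive integer q, the quantity Kurt(q, m) = (2·3^q / (1 − m^q)^2)·[1 + 2·((1+2m)m/3)^q + ((1+2m)/3)^q − 4 m^q] − 8 is nonnegative, and equals 0 when q = 1. -/
/-- The Mardia kurtosis of the Hadamard product of `q` independent mean-zero bivariate
normals with squared correlation `m = ρ²`. -/
noncomputable def Kurt (q : ℕ) (m : ℝ) : ℝ :=
  (2 * 3 ^ q / (1 - m ^ q) ^ 2) *
    (1 + 2 * ((1 + 2 * m) * m / 3) ^ q + ((1 + 2 * m) / 3) ^ q - 4 * m ^ q) - 8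

/-- Auxiliary polynomial expression: `3^q * S - 4*(1-m^q)^2` cleared of denominators. -/
noncomputable def Faux (q : ℕ) (m : ℝ) : ℝ :=
  3 ^ q + 2 * ((1 + 2 * m) * m) ^ q + (1 + 2 * m) ^ q + 8 * m ^ q
    - 4 - 4 * (3 * m) ^ q - 4 * (m ^ 2) ^ q

/-- Power-mean / convexity bound: `3*(1+2m)^n ≤ 3^n*(1+2m^n)` for `m ∈ [0,1]`. -/
lemma pm_bound (m : ℝ) (hm0 : 0 ≤ m) (hm1 : m ≤ 1) :
    ∀ n : ℕ, 3 * (1 + 2 * m) ^ n ≤ 3 ^ n * (1 + 2 * m ^ n) := by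
  intro n
  induction n with
  | zero => norm_num
  | succ n ih =>
    have hmn1 : m ^ n ≤ 1 := pow_le_one₀ hm0 hm1
    have hmn0 : 0 ≤ m ^ n := pow_nonneg hm0 n
    have h1 : (0:ℝ) ≤ 1 + 2 * m := by linarith
    have h2 : (1 + 2 * m) * (3 * (1 + 2 * m) ^ n) ≤ (1 + 2 * m) * (3 ^ n * (1 + 2 * m ^ n)) :=
      mul_le_mul_of_nonneg_left ih h1
    have h3 : (0:ℝ) ≤ (1 - m) * (1 - m ^ n) :=
      mul_nonneg (by linarith) (by linarith)
    have h4 : (1 + 2 * m) * (3 ^ n * (1 + 2 * m ^ n)) ≤ 3 ^ (n+1) * (1 + 2 * m ^ (n+1)) := by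
      have h5 : (0:ℝ) ≤ (3:ℝ) ^ n := by positivity
      have h6 : (1 + 2 * m) * (1 + 2 * m ^ n) ≤ 3 * (1 + 2 * (m ^ n * m)) := by nlinarith
      calc (1 + 2 * m) * (3 ^ n * (1 + 2 * m ^ n))
          = 3 ^ n * ((1 + 2 * m) * (1 + 2 * m ^ n)) := by ring
        _ ≤ 3 ^ n * (3 * (1 + 2 * (m ^ n * m))) := mul_le_mul_of_nonneg_left h6 h5
        _ = 3 ^ (n+1) * (1 + 2 * m ^ (n+1)) := by rw [pow_succ, pow_succ]; ring
    calc 3 * (1 + 2 * m) ^ (n+1) = (1 + 2 * m) * (3 * (1 + 2 * m) ^ n) := by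
          rw [pow_succ]; ring
      _ ≤ _ := le_trans h2 h4

/-- The quadratic `P(m,x) = (3+m) - (1+7m)x + (2-2m+4m²)x²` is nonnegative for `m ∈ [0,1]`. -/
lemma P_nonneg (m x : ℝ) (hm0 : 0 ≤ m) (hm1 : m ≤ 1) :
    0 ≤ (3 + m) - (1 + 7 * m) * x + (2 - 2 * m + 4 * m ^ 2) * x ^ 2 := by
  nlinarith [sq_nonneg (2 * (2 - 2 * m + 4 * m ^ 2) * x - (1 + 7 * m)),
    mul_nonneg (sq_nonneg (1 - m)) (by linarith : (0:ℝ) ≤ 16 * m + 23),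
    sq_nonneg m, sq_nonneg (1 - m), sq_nonneg x]

lemma Faux_nonneg (m : ℝ) (hm0 : 0 ≤ m) (hm1 : m ≤ 1) :
    ∀ q : ℕ, 1 ≤ q → 0 ≤ Faux q m := by
  intro q hq
  induction q with
  | zero => omega
  | succ n ih =>
    rcases Nat.eq_or_lt_of_le hq with h1 | h1
    · -- n + 1 = 1
      have : n = 0 := by omega
      subst this
      have h : Faux 1 m = 0 := by simp only [Faux, pow_one]; ring
      show (0:ℝ) ≤ Faux 1 m
      rw [h]
    · have hn1 : 1 ≤ n := by omega
      have ihn : 0 ≤ Faux n m := ih hn1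
      -- abbreviations
      have hx0 : (0:ℝ) ≤ m ^ n := pow_nonneg hm0 n
      have hx1 : m ^ n ≤ 1 := pow_le_one₀ hm0 hm1
      have hB3 : (3:ℝ) ≤ 3 ^ n := by
        calc (3:ℝ) = 3 ^ 1 := (pow_one 3).symm
          _ ≤ 3 ^ n := pow_le_pow_right₀ (by norm_num) hn1
      have hA : ((1 + 2*m) ^ n) * (1 + 2*m) ≤ (3 ^ n) * (1 + 2 * (m * m ^ n)) := by
        have := pm_bound m hm0 hm1 (n + 1)
        rw [pow_succ, pow_succ, pow_succ] at this
        linarith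
      -- three nonnegative pieces
      have t1 : 0 ≤ 2 * (m ^ n) * (1 - m) *
          ((3 ^ n) * (1 + 2 * (m * m ^ n)) - ((1 + 2*m) ^ n) * (1 + 2*m)) := by
        have h := sub_nonneg.mpr hA
        exact mul_nonneg (mul_nonneg (mul_nonneg (by norm_num : (0:ℝ) ≤ 2) hx0) (by linarith)) h
      have h2mx : 0 ≤ 1 + m ^ n - 2 * m * (m ^ n) ^ 2 := by
        nlinarith [mul_nonneg hm0 (sq_nonneg (m ^ n)), sq_nonneg (m ^ n)]
      have t2 : 0 ≤ 2 * ((3:ℝ) ^ n - 3) * (1 - m) * (1 + m ^ n - 2 * m * (m ^ n) ^ 2) := by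
        have h1m : (0:ℝ) ≤ 1 - m := by linarith
        have hb : (0:ℝ) ≤ (3:ℝ) ^ n - 3 := by linarith
        have := mul_nonneg (mul_nonneg (mul_nonneg (by norm_num : (0:ℝ) ≤ 2) hb) h1m) h2mx
        linarith [this]
      have t3 : 0 ≤ 2 * ((3 + m) - (1 + 7 * m) * m ^ n + (2 - 2 * m + 4 * m ^ 2) * (m ^ n) ^ 2) := by
        have := P_nonneg m (m ^ n) hm0 hm1
        linarith
      have key : Faux (n+1) m - (1 + 2*m) * Faux n m =
          2 * (m ^ n) * (1 - m) *
            ((3 ^ n) * (1 + 2 * (m * m ^ n)) - ((1 + 2*m) ^ n) * (1 + 2*m))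
          + 2 * ((3:ℝ) ^ n - 3) * (1 - m) * (1 + m ^ n - 2 * m * (m ^ n) ^ 2)
          + 2 * ((3 + m) - (1 + 7 * m) * m ^ n + (2 - 2 * m + 4 * m ^ 2) * (m ^ n) ^ 2) := by
        have h2 : (m ^ 2) ^ (n+1) = (m ^ (n+1)) ^ 2 := by
          rw [← pow_mul, ← pow_mul, Nat.mul_comm]
        have h2' : (m ^ 2) ^ n = (m ^ n) ^ 2 := by
          rw [← pow_mul, ← pow_mul, Nat.mul_comm]
        simp only [Faux, pow_succ, mul_pow, h2', h2]
        ring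
      have hmul : 0 ≤ (1 + 2*m) * Faux n m :=
        mul_nonneg (by linarith) ihn
      linarith

/-- For any `m ∈ [0,1)` and positive integer `q`, `Kurt (q, m)` is nonnegative,
and it equals `0` when `q = 1`. -/
theorem Kurt_nonneg_and_eq_zero_at_one (m : ℝ) (hm : m ∈ Set.Ico (0 : ℝ) 1) :
    (∀ q : ℕ, 1 ≤ q → 0 ≤ Kurt q m) ∧ Kurt 1 m = 0 := by
  obtain ⟨hm0, hm1⟩ := hm
  constructor
  · intro q hq
    have hq0 : q ≠ 0 := by omega
    have hlt : m ^ q < 1 := pow_lt_one₀ hm0 hm1 hq0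
    have hd : (0:ℝ) < (1 - m ^ q) ^ 2 := pow_pos (by linarith) 2
    have hK : Kurt q m = 2 * Faux q m / (1 - m ^ q) ^ 2 := by
      unfold Kurt Faux
      have hd' : ((1:ℝ) - m ^ q) ^ 2 ≠ 0 := ne_of_gt hd
      have h3 : ((3:ℝ)) ^ q ≠ 0 := by positivity
      rw [div_pow, div_pow, div_mul_eq_mul_div, div_sub' hd', div_left_inj' hd']
      field_simp
      ring
    rw [hK]
    have hF := Faux_nonneg m hm0 (le_of_lt hm1) q hq
    exact div_nonneg (by linarith) hd.le
  · have h1 : (1:ℝ) - m ≠ 0 := by linarith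
    unfold Kurt
    simp only [pow_one]
    field_simp
    ring
end

section
/- For 0 ≤ m < 1, the function q ↦ 1 − m^q is increasing in q, and hence 1/(1 − m^q)^2 is decreasing in q; nevertheless 3^q grows fast enough that (2·3^q/(1−m^q)^2)·[1 + 2((1+2m)m/3)^q + ((1+2m)/3)^q − 4m^q] is increasing in q. In particular, for m = 0 this quantity reduces to 2·3^q·(1 + 3^{−q}) = 2·3^q + 2, which is increasing in q. -/
private lemma certW1 (m a : ℝ) (hm0 : 0 ≤ m) (hm1 : m ≤ 1) (ha0 : 0 ≤ a) (ha1 : a ≤ 1) :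
    0 ≤ (4*a-1)*((1+2*m)*(1-a)^2*(1+2*m*a)-(1-m*a)^2*(1+2*a))
      + (1+2*a)*(3*(1-a)^2*(1-4*m*a)-(1-m*a)^2*(1-4*a)) := by
  have hW : (0:ℝ) ≤ 1-m := by linarith
  have hU : (0:ℝ) ≤ 1-a := by linarith
  have t1 : (0:ℝ) ≤ a^2*(1-m)^3*(1-a)^3 := by apply_rules [mul_nonneg, pow_nonneg]
  have t2 : (0:ℝ) ≤ m*(1-m)^2*(1-a)^5 := by apply_rules [mul_nonneg, pow_nonneg]
  have t3 : (0:ℝ) ≤ a^2*(1-m)^2*(1-a)^2 := by apply_rules [mul_nonneg, pow_nonneg]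
  have t4 : (0:ℝ) ≤ a*(1-m)*(1-a)^3 := by apply_rules [mul_nonneg, pow_nonneg]
  have t5 : (0:ℝ) ≤ m^2*(1-m)*(1-a)^3 := by apply_rules [mul_nonneg, pow_nonneg]
  have t6 : (0:ℝ) ≤ a^3*(1-m)^2*(1-a)^2 := by apply_rules [mul_nonneg, pow_nonneg]
  have t7 : (0:ℝ) ≤ (1-m)^2*(1-a)^5 := by apply_rules [mul_nonneg, pow_nonneg]
  have t8 : (0:ℝ) ≤ m*(1-m)^2*(1-a)^2 := by apply_rules [mul_nonneg, pow_nonneg]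
  have t9 : (0:ℝ) ≤ a^3*(1-m)^3*(1-a)^2 := by apply_rules [mul_nonneg, pow_nonneg]
  have key : (4*a-1)*((1+2*m)*(1-a)^2*(1+2*m*a)-(1-m*a)^2*(1+2*a))
      + (1+2*a)*(3*(1-a)^2*(1-4*m*a)-(1-m*a)^2*(1-4*a))
      = 2*(a^2*(1-m)^3*(1-a)^3) + 2/3*(m*(1-m)^2*(1-a)^5) + 8*(a^2*(1-m)^2*(1-a)^2)
      + 16*(a*(1-m)*(1-a)^3) + 2*(m^2*(1-m)*(1-a)^3) + 8/3*(a^3*(1-m)^2*(1-a)^2)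
      + 2*((1-m)^2*(1-a)^5) + 4/3*(m*(1-m)^2*(1-a)^2) + 4/3*(a^3*(1-m)^3*(1-a)^2) := by
    ring
  linarith [key]

private lemma certP (m a : ℝ) (hm0 : 0 ≤ m) (hm1 : m ≤ 1) (ha0 : 0 ≤ a) (ha1 : a ≤ 1)
    (ha14 : a ≤ 1/4) : 0 ≤ 3*(1-a)^2*(1-4*m*a)-(1-m*a)^2*(1-4*a) := by
  have hW : (0:ℝ) ≤ 1-m := by linarith
  have hU : (0:ℝ) ≤ 1-a := by linarith
  have hG : (0:ℝ) ≤ 1-4*a := by linarith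
  have t1 : (0:ℝ) ≤ m^2*(1-4*a)^3 := by apply_rules [mul_nonneg, pow_nonneg]
  have t2 : (0:ℝ) ≤ a^3*(1-m) := by apply_rules [mul_nonneg, pow_nonneg]
  have t3 : (0:ℝ) ≤ m*a*(1-m)*(1-a)*(1-4*a) := by apply_rules [mul_nonneg, pow_nonneg]
  have t4 : (0:ℝ) ≤ a^2*(1-4*a) := by apply_rules [mul_nonneg, pow_nonneg]
  have t5 : (0:ℝ) ≤ m*(1-4*a) := by apply_rules [mul_nonneg, pow_nonneg]
  have t6 : (0:ℝ) ≤ m*(1-m)*(1-4*a) := by apply_rules [mul_nonneg, pow_nonneg]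
  have t7 : (0:ℝ) ≤ m*a*(1-4*a)^2 := by apply_rules [mul_nonneg, pow_nonneg]
  have t8 : (0:ℝ) ≤ m*(1-m)*(1-4*a)^3 := by apply_rules [mul_nonneg, pow_nonneg]
  have t9 : (0:ℝ) ≤ (1-m)^2*(1-4*a) := by apply_rules [mul_nonneg, pow_nonneg]
  have key : 3*(1-a)^2*(1-4*m*a)-(1-m*a)^2*(1-4*a)
      = 17/16*(m^2*(1-4*a)^3) + 12*(a^3*(1-m)) + 3/2*(1-m) + (m*a*(1-m)*(1-a)*(1-4*a))
      + 3*(a^2*(1-4*a)) + 15/16*(m*(1-4*a)) + 3/8*(m*(1-m)*(1-4*a))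
      + 9/2*(m*a*(1-4*a)^2) + 19/16*(m*(1-m)*(1-4*a)^3) + 1/2*((1-m)^2*(1-4*a)) := by
    ring
  linarith [key]

private lemma certW3 (a : ℝ) (ha0 : 0 ≤ a) (ha1 : a ≤ 1) : (4*a-1)^3 ≤ a^2*(1+2*a)^3 := by
  nlinarith [mul_nonneg (mul_nonneg (mul_nonneg ha0 ha0) ha0) (sq_nonneg (1-a)),
    sq_nonneg ((28*a-5)*(1-a)), sq_nonneg (1-a)]

private lemma certS (m a : ℝ) (hm0 : 0 ≤ m) (hm1 : m ≤ 1) (ha0 : 0 ≤ a) (ham : a ≤ m^2) :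
    0 ≤ 1 + m - 2*a - 4*m*a + 2*m^2*a + 5*m*a^2 - 3*m^2*a^2 := by
  nlinarith [sq_nonneg (1-m), sq_nonneg (m^2-a), sq_nonneg (1-a), mul_nonneg ha0 hm0,
    mul_nonneg (mul_nonneg hm0 ha0) ha0, sq_nonneg (m-a), mul_nonneg hm0 (sub_nonneg.2 ham),
    mul_nonneg ha0 (sub_nonneg.2 ham), mul_nonneg (sub_nonneg.2 hm1) ha0]

set_option maxHeartbeats 1000000 in
private lemma stepKey (m a x y : ℝ) (hm0 : 0 ≤ m) (hm1 : m ≤ 1) (ha0 : 0 ≤ a) (ham : a ≤ m^2)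
    (hx1 : 1 ≤ x) (hy0 : 0 ≤ y) (hyx : y ≤ x) (hcube : x^3*a^2 ≤ y^3) :
    (x*(1-4*a)+y*(1+2*a))*(1-m*a)^2 ≤ (3*x*(1-4*m*a)+(1+2*m)*y*(1+2*m*a))*(1-a)^2 := by
  have ha1 : a ≤ 1 := by nlinarith
  set P : ℝ := 3*(1-a)^2*(1-4*m*a)-(1-m*a)^2*(1-4*a) with hPdef
  set Q : ℝ := (1+2*m)*(1-a)^2*(1+2*m*a)-(1-m*a)^2*(1+2*a) with hQdef
  have hgoal : (3*x*(1-4*m*a)+(1+2*m)*y*(1+2*m*a))*(1-a)^2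
      - (x*(1-4*a)+y*(1+2*a))*(1-m*a)^2 = x*P + y*Q := by rw [hPdef, hQdef]; ring
  have main : 0 ≤ x*P + y*Q := by
    rcases le_or_gt Q 0 with hQ | hQ
    · have hS := certS m a hm0 hm1 ha0 ham
      have hPQ : 0 ≤ P + Q := by
        have : P + Q = 2*(1-a)*(1 + m - 2*a - 4*m*a + 2*m^2*a + 5*m*a^2 - 3*m^2*a^2) := by
          rw [hPdef, hQdef]; ring
        rw [this]
        have : (0:ℝ) ≤ 1 - a := by linarith
        positivity
      nlinarith [mul_nonneg (sub_nonneg.2 hyx) (neg_nonneg.2 hQ),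
        mul_nonneg (by linarith : (0:ℝ) ≤ x) hPQ]
    · rcases le_or_gt 0 P with hP | hP
      · have := mul_nonneg (by linarith : (0:ℝ) ≤ x) hP
        have := mul_nonneg hy0 hQ.le
        linarith
      · have ha14 : 1/4 < a := by
          by_contra h
          exact absurd (certP m a hm0 hm1 ha0 ha1 (by linarith)) (by rw [← hPdef]; linarith)
        have hchain : (-P)*(1+2*a) ≤ Q*(4*a-1) := by
          have := certW1 m a hm0 hm1 ha0 ha1
          rw [← hPdef, ← hQdef] at this; linarith
        have hc3 : ((-P)*(1+2*a))^3 ≤ (Q*(4*a-1))^3 := by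
          apply pow_le_pow_left₀ (mul_nonneg (by linarith) (by linarith)) hchain
        have hW3 := certW3 a ha0 ha1
        have hQ3 : (0:ℝ) ≤ Q^3 := by positivity
        have hP3 : (-P)^3 ≤ a^2*Q^3 := by
          have h1 : (-P)^3*(1+2*a)^3 ≤ Q^3*(4*a-1)^3 := by
            calc (-P)^3*(1+2*a)^3 = ((-P)*(1+2*a))^3 := by ring
            _ ≤ (Q*(4*a-1))^3 := hc3
            _ = Q^3*(4*a-1)^3 := by ring
          have h2 : Q^3*(4*a-1)^3 ≤ Q^3*(a^2*(1+2*a)^3) := by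
            apply mul_le_mul_of_nonneg_left hW3 hQ3
          have h3 : (0:ℝ) < (1+2*a)^3 := by positivity
          nlinarith [h1, h2]
        have hxy : x*(-P) ≤ y*Q := by
          apply le_of_pow_le_pow_left₀ (n := 3) (by norm_num) (by positivity)
          calc (x*(-P))^3 = x^3*(-P)^3 := by ring
          _ ≤ x^3*(a^2*Q^3) := by
              apply mul_le_mul_of_nonneg_left hP3 (by positivity)
          _ = (x^3*a^2)*Q^3 := by ring
          _ ≤ y^3*Q^3 := by apply mul_le_mul_of_nonneg_right hcube hQ3
          _ = (y*Q)^3 := by ring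
        linarith
  linarith [hgoal, main]


/-- For `0 ≤ m < 1`: `q ↦ 1 − m^q` is increasing in `q`, hence `q ↦ 1/(1 − m^q)²` is
decreasing in `q`; nevertheless the quantity
`(2·3^q/(1−m^q)²)·[1 + 2((1+2m)m/3)^q + ((1+2m)/3)^q − 4m^q]` is increasing in `q`.
In particular, for `m = 0` it reduces to `2·3^q + 2`. -/
theorem growth_of_kurtosis_factor (m : ℝ) (hm : m ∈ Set.Ico (0 : ℝ) 1) :
    (∀ q₁ q₂ : ℕ, 1 ≤ q₁ → q₁ ≤ q₂ → 1 - m ^ q₁ ≤ 1 - m ^ q₂) ∧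
      (∀ q₁ q₂ : ℕ, 1 ≤ q₁ → q₁ ≤ q₂ →
        1 / (1 - m ^ q₂) ^ 2 ≤ 1 / (1 - m ^ q₁) ^ 2) ∧
      (∀ q₁ q₂ : ℕ, 1 ≤ q₁ → q₁ ≤ q₂ →
        (2 * 3 ^ q₁ / (1 - m ^ q₁) ^ 2) *
            (1 + 2 * ((1 + 2 * m) * m / 3) ^ q₁ + ((1 + 2 * m) / 3) ^ q₁ - 4 * m ^ q₁) ≤
          (2 * 3 ^ q₂ / (1 - m ^ q₂) ^ 2) *
            (1 + 2 * ((1 + 2 * m) * m / 3) ^ q₂ + ((1 + 2 * m) / 3) ^ q₂ - 4 * m ^ q₂)) ∧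
      (m = 0 → ∀ q : ℕ, 1 ≤ q →
        (2 * 3 ^ q / (1 - m ^ q) ^ 2) *
            (1 + 2 * ((1 + 2 * m) * m / 3) ^ q + ((1 + 2 * m) / 3) ^ q - 4 * m ^ q) =
          2 * 3 ^ q + 2) := by
  obtain ⟨hm0, hm1⟩ := hm
  have hpowlt : ∀ q : ℕ, 1 ≤ q → m ^ q < 1 := fun q hq =>
    pow_lt_one₀ hm0 hm1 (by omega)
  have hmono : ∀ q₁ q₂ : ℕ, 1 ≤ q₁ → q₁ ≤ q₂ → m ^ q₂ ≤ m ^ q₁ := fun q₁ q₂ _ h =>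
    pow_le_pow_of_le_one hm0 hm1.le h
  refine ⟨fun q₁ q₂ h1 h12 => by linarith [hmono q₁ q₂ h1 h12], ?_, ?_, ?_⟩
  · intro q₁ q₂ h1 h12
    have d1 : (0:ℝ) < 1 - m ^ q₁ := by linarith [hpowlt q₁ h1]
    have d2 : (0:ℝ) < 1 - m ^ q₂ := by linarith [hpowlt q₂ (h1.trans h12)]
    apply one_div_le_one_div_of_le (by positivity)
    have := hmono q₁ q₂ h1 h12
    nlinarith
  · intro q₁ q₂ h1 h12
    -- rewrite to the N-form
    have hrw : ∀ q : ℕ, 1 ≤ q →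
        (2 * 3 ^ q / (1 - m ^ q) ^ 2) *
          (1 + 2 * ((1 + 2 * m) * m / 3) ^ q + ((1 + 2 * m) / 3) ^ q - 4 * m ^ q)
        = 2 * (3 ^ q * (1 - 4 * m ^ q) + (1 + 2 * m) ^ q * (1 + 2 * m ^ q)) / (1 - m ^ q) ^ 2 := by
      intro q hq
      have h3 : ((3:ℝ) ^ q) ≠ 0 := by positivity
      have hd : ((1:ℝ) - m ^ q) ≠ 0 := by linarith [hpowlt q hq]
      rw [div_pow, mul_pow, div_pow]
      field_simp
      ring
    have hstep : ∀ q : ℕ, 1 ≤ q →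
        (2 * 3 ^ q / (1 - m ^ q) ^ 2) *
          (1 + 2 * ((1 + 2 * m) * m / 3) ^ q + ((1 + 2 * m) / 3) ^ q - 4 * m ^ q) ≤
        (2 * 3 ^ (q+1) / (1 - m ^ (q+1)) ^ 2) *
          (1 + 2 * ((1 + 2 * m) * m / 3) ^ (q+1) + ((1 + 2 * m) / 3) ^ (q+1) - 4 * m ^ (q+1)) := by
      intro q hq
      rw [hrw q hq, hrw (q+1) (by omega)]
      have d1 : (0:ℝ) < 1 - m ^ q := by linarith [hpowlt q hq]
      have d2 : (0:ℝ) < 1 - m ^ (q+1) := by linarith [hpowlt (q+1) (by omega)]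
      rw [div_le_div_iff₀ (by positivity) (by positivity)]
      rcases eq_or_lt_of_le hq with hq1 | hq2
      · -- q = 1
        subst hq1
        have hWm : (0:ℝ) ≤ 1 - m := by linarith
        have b1 : (0:ℝ) ≤ m^3*(1-m)^4 := by apply_rules [mul_nonneg, pow_nonneg]
        have b2 : (0:ℝ) ≤ (1-m)^5 := by apply_rules [pow_nonneg]
        have b3 : (0:ℝ) ≤ m*(1-m)^6 := by apply_rules [mul_nonneg, pow_nonneg]
        have b4 : (0:ℝ) ≤ m^2*(1-m)^5 := by apply_rules [mul_nonneg, pow_nonneg]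
        norm_num
        nlinarith [b1, b2, b3, b4]
      · -- q ≥ 2
        have ham : m ^ q ≤ m ^ 2 := pow_le_pow_of_le_one hm0 hm1.le (by omega)
        have hx1 : (1:ℝ) ≤ 3 ^ q := by
          calc (1:ℝ) = 1 ^ q := (one_pow q).symm
          _ ≤ 3 ^ q := pow_le_pow_left₀ one_pos.le (by norm_num) q
        have hy0 : (0:ℝ) ≤ (1 + 2 * m) ^ q := by positivity
        have hyx : (1 + 2 * m) ^ q ≤ 3 ^ q := pow_le_pow_left₀ (by linarith) (by linarith) q
        have hcube : ((3:ℝ) ^ q) ^ 3 * (m ^ q) ^ 2 ≤ ((1 + 2 * m) ^ q) ^ 3 := by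
          have h27 : (27 * m ^ 2 : ℝ) ^ q ≤ ((1 + 2 * m) ^ 3) ^ q := by
            apply pow_le_pow_left₀ (by positivity) (by nlinarith [sq_nonneg (m - 1), hm0]) q
          calc ((3:ℝ) ^ q) ^ 3 * (m ^ q) ^ 2 = ((3:ℝ) ^ 3) ^ q * (m ^ 2) ^ q := by
                rw [pow_right_comm 3 q 3, pow_right_comm m q 2]
          _ = (27 * m ^ 2) ^ q := by rw [← mul_pow]; norm_num
          _ ≤ ((1 + 2 * m) ^ 3) ^ q := h27
          _ = ((1 + 2 * m) ^ q) ^ 3 := pow_right_comm _ _ _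
        have H := stepKey m (m ^ q) (3 ^ q) ((1 + 2 * m) ^ q) hm0 hm1.le (by positivity) ham
          hx1 hy0 hyx hcube
        have e1 : (m:ℝ) ^ (q+1) = m * m ^ q := by rw [pow_succ]; ring
        have e2 : (3:ℝ) ^ (q+1) = 3 * 3 ^ q := by rw [pow_succ]; ring
        have e3 : ((1+2*m):ℝ) ^ (q+1) = (1+2*m) * (1+2*m) ^ q := by rw [pow_succ]; ring
        rw [e1, e2, e3]
        nlinarith [H]
    have : ∀ n : ℕ, q₁ ≤ n →
        (2 * 3 ^ q₁ / (1 - m ^ q₁) ^ 2) *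
          (1 + 2 * ((1 + 2 * m) * m / 3) ^ q₁ + ((1 + 2 * m) / 3) ^ q₁ - 4 * m ^ q₁) ≤
        (2 * 3 ^ n / (1 - m ^ n) ^ 2) *
          (1 + 2 * ((1 + 2 * m) * m / 3) ^ n + ((1 + 2 * m) / 3) ^ n - 4 * m ^ n) := by
      refine Nat.le_induction le_rfl ?_
      intro n hn ih
      exact ih.trans (hstep n (h1.trans hn))
    exact this q₂ h12
  · intro hm0' q hq
    subst hm0'
    have hq0 : q ≠ 0 := by omega
    have h3 : ((3:ℝ) ^ q) ≠ 0 := by positivity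
    simp only [zero_pow hq0, mul_zero, zero_mul, zero_div, add_zero, mul_zero]
    norm_num
    rw [div_pow]
    field_simp
    ring
end
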